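/- Let d₁ ≥ ⋯ ≥ d_p > 0 with min_{l=1,…,p−1} d_l/d_{l+1} > c for some c > 1, let λ > 0 and 1 ≤ k ≤ p with |λ/d_k − 1| < (c−1)/(2c), and set c₁ = min{ (c−1)/2, ((c−1)/c)(1 − 1/(2c)) }. Let Ω = (ω_{i,j}) be a p×p real symmetric matrix with positive diagonal entries satisfying max_{j} |ω_{j,j} − 1| ≤ c₁/2, let D = diag(d₁,…,d_p), let V = Ω − λD^{−1} with diagonal entries v_{j,j} = ω_{j,j} − λ/d_j (which are nonzero for j ≠ k), let J_k = diag(v_{1,1}^{−1},…,v_{k−1,k−1}^{−1}, 1, v_{k+1,k+1}^{−1},…,v_{p,p}^{−1}), and define φ̃(λ) = det(V J_k). If p‖Ω − I_p‖₂ ≤ c₁/8, then |φ̃(λ) − (ω_{k,k} − λ/d_k)| ≤ max{12, 8/c₁} · p · ‖Ω − I_p‖₂. -/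

import Mathlib

open Matrix

/-- Spectral norm (ℓ²-operator norm) of a real matrix. -/
noncomputable def sNorm {m n : Type*} [Fintype m] [Fintype n] [DecidableEq n]
    (A : Matrix m n ℝ) : ℝ :=
  ‖LinearMap.toContinuousLinearMap (Matrix.toEuclideanLin A)‖

lemma sNorm_nonneg {m n : Type*} [Fintype m] [Fintype n] [DecidableEq n]
    (A : Matrix m n ℝ) : 0 ≤ sNorm A := norm_nonneg _

lemma abs_entry_le_sNorm {m n : Type*} [Fintype m] [Fintype n] [DecidableEq n]
    (A : Matrix m n ℝ) (i : m) (j : n) : |A i j| ≤ sNorm A := by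
  set f := LinearMap.toContinuousLinearMap (Matrix.toEuclideanLin A)
  have hx : ‖(EuclideanSpace.single j (1:ℝ) : EuclideanSpace ℝ n)‖ = 1 := by
    simp [EuclideanSpace.norm_single]
  have h1 : f (EuclideanSpace.single j (1:ℝ)) = (WithLp.equiv 2 (m → ℝ)).symm (A *ᵥ (Pi.single j 1)) := by
    simp [f, Matrix.toEuclideanLin_apply]
  have h2 : ‖f (EuclideanSpace.single j (1:ℝ))‖ ≤ sNorm A := by
    have := f.le_opNorm (EuclideanSpace.single j (1:ℝ))
    rw [hx, mul_one] at this
    exact this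
  refine le_trans ?_ h2
  rw [h1]
  have : A *ᵥ (Pi.single j 1) = fun i => A i j := by
    ext i; simp [Matrix.mulVec_single]
  rw [this]
  have := EuclideanSpace.norm_eq ((WithLp.equiv 2 (m → ℝ)).symm (fun i => A i j))
  rw [this]
  have hterm : |A i j| = Real.sqrt (‖A i j‖^2) := by
    rw [Real.sqrt_sq_eq_abs]; simp
  rw [hterm]
  apply Real.sqrt_le_sqrt
  have : ‖A i j‖^2 = ‖(WithLp.equiv 2 (m → ℝ)).symm (fun i => A i j) i‖^2 := rfl
  rw [this]
  exact Finset.single_le_sum (f := fun i' => ‖(WithLp.equiv 2 (m → ℝ)).symm (fun i => A i j) i'‖^2)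
    (fun _ _ => sq_nonneg _) (Finset.mem_univ i)

lemma card_support_eq_le {α : Type*} [DecidableEq α] [Fintype α] (S : Finset α) :
    (Finset.univ.filter (fun σ : Equiv.Perm α => σ.support = S)).card ≤ Nat.factorial S.card := by
  have h1 : (Finset.univ.filter (fun σ : Equiv.Perm α => σ.support = S)).card
      ≤ Fintype.card {σ : Equiv.Perm α // ∀ a, a ∉ S → σ a = a} := by
    rw [Fintype.card_subtype]
    apply Finset.card_le_card
    intro σ hσ
    simp only [Finset.mem_filter, Finset.mem_univ, true_and] at hσ ⊢
    intro a ha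
    rw [← hσ] at ha
    exact Equiv.Perm.notMem_support.mp ha
  have h2 : Fintype.card {σ : Equiv.Perm α // ∀ a, a ∉ S → σ a = a}
      = Nat.factorial S.card := by
    rw [← Fintype.card_coe S, ← Fintype.card_perm]
    exact (Fintype.card_congr (Equiv.Perm.subtypeEquivSubtypePerm (fun a => a ∈ S)).symm)
  omega

lemma card_support_card_eq_le {α : Type*} [DecidableEq α] [Fintype α] (m : ℕ) :
    (Finset.univ.filter (fun σ : Equiv.Perm α => σ.support.card = m)).card
      ≤ (Fintype.card α) ^ m := by
  have hsub : (Finset.univ.filter (fun σ : Equiv.Perm α => σ.support.card = m))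
      ⊆ (Finset.powersetCard m Finset.univ).biUnion
        (fun S => Finset.univ.filter (fun σ : Equiv.Perm α => σ.support = S)) := by
    intro σ hσ
    simp only [Finset.mem_filter, Finset.mem_univ, true_and] at hσ
    rw [Finset.mem_biUnion]
    exact ⟨σ.support, by simp [Finset.mem_powersetCard, hσ], by simp⟩
  calc (Finset.univ.filter (fun σ : Equiv.Perm α => σ.support.card = m)).card
      ≤ ((Finset.powersetCard m Finset.univ).biUnion
        (fun S => Finset.univ.filter (fun σ : Equiv.Perm α => σ.support = S))).card :=
        Finset.card_le_card hsub
    _ ≤ ∑ S ∈ Finset.powersetCard m Finset.univ,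
        (Finset.univ.filter (fun σ : Equiv.Perm α => σ.support = S)).card :=
        Finset.card_biUnion_le
    _ ≤ ∑ S ∈ Finset.powersetCard m Finset.univ, Nat.factorial m := by
        apply Finset.sum_le_sum
        intro S hS
        rw [Finset.mem_powersetCard] at hS
        rw [← hS.2]
        exact card_support_eq_le S
    _ = (Fintype.card α).choose m * Nat.factorial m := by
        rw [Finset.sum_const, Finset.card_powersetCard, Finset.card_univ, smul_eq_mul]
    _ = (Fintype.card α).descFactorial m := by
        rw [Nat.descFactorial_eq_factorial_mul_choose]; ring
    _ ≤ (Fintype.card α) ^ m := Nat.descFactorial_le_pow _ _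

lemma sum_perm_pow_le {α : Type*} [DecidableEq α] [Fintype α] (δ : ℝ) (hδ : 0 ≤ δ) :
    ∑ σ ∈ Finset.univ.filter (fun σ : Equiv.Perm α => σ ≠ 1), δ ^ σ.support.card
      ≤ ∑ m ∈ Finset.Icc 2 (Fintype.card α), ((Fintype.card α : ℝ) * δ) ^ m := by
  rw [← Finset.sum_fiberwise_of_maps_to (g := fun σ : Equiv.Perm α => σ.support.card)
    (t := Finset.Icc 2 (Fintype.card α)) (fun σ hσ => by
      simp only [Finset.mem_filter, Finset.mem_univ, true_and] at hσ
      rw [Finset.mem_Icc]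
      exact ⟨Equiv.Perm.two_le_card_support_of_ne_one hσ,
        le_trans (Finset.card_le_univ _) (le_of_eq (Finset.card_univ))⟩)]
  apply Finset.sum_le_sum
  intro m _
  have hcongr : ∀ σ ∈ (Finset.univ.filter (fun σ : Equiv.Perm α => σ ≠ 1)).filter
      (fun σ => σ.support.card = m), δ ^ σ.support.card = δ ^ m := by
    intro σ hσ
    simp only [Finset.mem_filter] at hσ
    rw [hσ.2]
  rw [Finset.sum_congr rfl hcongr, Finset.sum_const, nsmul_eq_mul, mul_pow]
  apply mul_le_mul_of_nonneg_right _ (pow_nonneg hδ m)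
  have hcard : ((Finset.univ.filter (fun σ : Equiv.Perm α => σ ≠ 1)).filter
      (fun σ => σ.support.card = m)).card ≤ (Fintype.card α) ^ m := by
    refine le_trans (Finset.card_le_card ?_) (card_support_card_eq_le m)
    intro σ hσ
    simp only [Finset.mem_filter, Finset.mem_univ, true_and] at hσ ⊢
    exact hσ.2
  calc (((Finset.univ.filter (fun σ : Equiv.Perm α => σ ≠ 1)).filter
      (fun σ => σ.support.card = m)).card : ℝ)
      ≤ ((Fintype.card α) ^ m : ℕ) := by exact_mod_cast hcard
    _ = (Fintype.card α : ℝ) ^ m := by push_cast; ring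

lemma geom_icc_le (x : ℝ) (h0 : 0 ≤ x) (h4 : x ≤ 1/4) (n : ℕ) :
    ∑ m ∈ Finset.Icc 2 n, x ^ m ≤ x / 3 := by
  have claim : ∀ n, 1 ≤ n → ∑ m ∈ Finset.Icc 2 n, x ^ m ≤ (4/3)*(x^2 - x^(n+1)) := by
    intro n hn
    induction n, hn using Nat.le_induction with
    | base =>
      rw [show Finset.Icc 2 1 = (∅ : Finset ℕ) from Finset.Icc_eq_empty (by omega)]
      simp
    | succ n hn ih =>
      rw [Finset.sum_Icc_succ_top (by omega)]
      have hx1 : (0:ℝ) ≤ x^(n+1) := pow_nonneg h0 _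
      have hstep : x^(n+1+1) ≤ (1/4) * x^(n+1) := by
        rw [pow_succ]
        nlinarith
      have : x^(n+1+1+1) ≤ (1/4) * x^(n+1+1) := by
        rw [pow_succ (n := n+1+1)]
        nlinarith [pow_nonneg h0 (n+1+1)]
      nlinarith
  cases n with
  | zero =>
    rw [show Finset.Icc 2 0 = (∅ : Finset ℕ) from Finset.Icc_eq_empty (by omega)]
    simp; linarith
  | succ n =>
    have := claim (n+1) (by omega)
    have hx1 : (0:ℝ) ≤ x^(n+2) := pow_nonneg h0 _
    nlinarith

set_option maxHeartbeats 1000000 in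
/-- Appendix Lemma A.3 (determinant perturbation bound for the rescaled characteristic
polynomial). Indices are 0-based. -/
theorem statement8 {p : ℕ} (d : Fin p → ℝ) (hpos : ∀ i, 0 < d i) (hmono : Antitone d)
    (c : ℝ) (hc : 1 < c)
    (hgap : ∀ l : ℕ, (h : l + 1 < p) → c < d ⟨l, by omega⟩ / d ⟨l + 1, h⟩)
    (lam : ℝ) (hlam : 0 < lam) (k : Fin p)
    (hk : |lam / d k - 1| < (c - 1) / (2 * c))
    (c₁ : ℝ) (hc₁ : c₁ = min ((c - 1) / 2) ((c - 1) / c * (1 - 1 / (2 * c))))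
    (Omg : Matrix (Fin p) (Fin p) ℝ) (hsymm : Omg.IsSymm)
    (hdiagpos : ∀ j, 0 < Omg j j) (hdiag : ∀ j, |Omg j j - 1| ≤ c₁ / 2)
    (V : Matrix (Fin p) (Fin p) ℝ)
    (hV : V = Omg - Matrix.diagonal fun j => lam * (d j)⁻¹)
    (Jk : Matrix (Fin p) (Fin p) ℝ)
    (hJk : Jk = Matrix.diagonal fun j => if j = k then (1 : ℝ) else (Omg j j - lam / d j)⁻¹)
    (hsmall : (p : ℝ) * sNorm (Omg - 1) ≤ c₁ / 8) :
    |(V * Jk).det - (Omg k k - lam / d k)| ≤ max 12 (8 / c₁) * p * sNorm (Omg - 1) := by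
  have hc0 : (0:ℝ) < c := by linarith
  -- c₁ facts
  have hc1pos : 0 < c₁ := by
    rw [hc₁]
    apply lt_min
    · linarith
    · have h1 : 0 < (c-1)/c := div_pos (by linarith) hc0
      have h2 : 0 < 1 - 1/(2*c) := by
        rw [sub_pos, div_lt_one (by linarith)]
        linarith
      exact mul_pos h1 h2
  have hc1le2 : c₁ ≤ (c - 1) / c * (1 - 1 / (2 * c)) := by rw [hc₁]; exact min_le_right _ _
  have hc1le1 : c₁ ≤ (c - 1) / 2 := by rw [hc₁]; exact min_le_left _ _
  have hc1lt1 : c₁ < 1 := by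
    have h1 : (c-1)/c < 1 := by rw [div_lt_one hc0]; linarith
    have h2 : 1 - 1/(2*c) < 1 := by
      have : 0 < 1/(2*c) := by positivity
      linarith
    have h3 : 0 < 1 - 1/(2*c) := by
      rw [sub_pos, div_lt_one (by linarith)]; linarith
    nlinarith
  -- norm notation
  set ε := sNorm (Omg - 1) with hεdef
  have hε0 : 0 ≤ ε := sNorm_nonneg _
  have hmax0 : (0:ℝ) ≤ max 1 (2/c₁) := le_trans zero_le_one (le_max_left _ _)
  set δ := ε * max 1 (2/c₁) with hδdef
  have hδ0 : 0 ≤ δ := mul_nonneg hε0 hmax0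
  have hεoff : ∀ i j : Fin p, i ≠ j → |Omg i j| ≤ ε := by
    intro i j hij
    have := abs_entry_le_sNorm (Omg - 1) i j
    rwa [Matrix.sub_apply, Matrix.one_apply_ne hij, sub_zero] at this
  -- spectral gap: for j ≠ k, c₁ ≤ |lam / d j - 1|
  have hlt : ∀ i j : Fin p, i < j → c * d j ≤ d i := by
    intro i j hij
    have h1 : (i : ℕ) + 1 < p := by
      have := j.isLt
      have : (i:ℕ) < (j:ℕ) := hij
      omega
    have h2 := hgap i h1
    have h3 : d ⟨(i : ℕ), by omega⟩ = d i := rfl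
    have h4 : d ⟨(i : ℕ) + 1, h1⟩ ≥ d j := hmono (by
      rw [Fin.le_def]; simp
      have : (i:ℕ) < (j:ℕ) := hij
      omega)
    have h5 : 0 < d ⟨(i : ℕ) + 1, h1⟩ := hpos _
    rw [h3] at h2
    have h6 : c * d ⟨(i : ℕ) + 1, h1⟩ < d i := by
      rw [lt_div_iff₀ h5] at h2; linarith
    nlinarith [hpos j]
  have hgapk : ∀ j : Fin p, j ≠ k → c₁ ≤ |lam / d j - 1| := by
    intro j hj
    have hdk : 0 < d k := hpos k
    have hdj : 0 < d j := hpos j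
    have habs := abs_lt.mp hk
    rcases hj.lt_or_gt with hlt' | hlt'
    · -- j < k : lam / d j is small
      have hd : c * d k ≤ d j := hlt j k hlt'
      have hub : lam / d k < (3*c - 1)/(2*c) := by
        have h := habs.2
        have heq : (c-1)/(2*c) + 1 = (3*c-1)/(2*c) := by field_simp; ring
        linarith
      have hle : lam / d j ≤ (lam / d k) / c := by
        rw [div_div, div_le_div_iff₀ hdj (by positivity)]
        nlinarith
      have hub2 : (lam / d k) / c < (3*c-1)/(2*c^2) := by
        rw [div_lt_div_iff₀ hdk (by positivity)] at hub
        rw [div_div, div_lt_div_iff₀ (by positivity) (by positivity)]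
        nlinarith
      have hkey : (c - 1) / c * (1 - 1 / (2 * c)) = 1 - (3*c-1)/(2*c^2) := by
        field_simp; ring
      have : c₁ ≤ 1 - lam / d j := by
        rw [hkey] at hc1le2
        linarith
      calc c₁ ≤ 1 - lam / d j := this
        _ = -(lam / d j - 1) := by ring
        _ ≤ |lam / d j - 1| := neg_le_abs _
    · -- k < j : lam / d j is large
      have hd : c * d j ≤ d k := hlt k j hlt'
      have hlb : (c+1)/(2*c) < lam / d k := by
        have h := habs.1
        have heq : 1 - (c-1)/(2*c) = (c+1)/(2*c) := by field_simp; ring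
        linarith
      have hge : c * (lam / d k) ≤ lam / d j := by
        rw [mul_div_assoc', div_le_div_iff₀ hdk hdj]
        nlinarith [mul_le_mul_of_nonneg_left hd hlam.le]
      have : (c+1)/2 < lam / d j := by
        have h2 : c * ((c+1)/(2*c)) = (c+1)/2 := by field_simp
        have h3 := mul_lt_mul_of_pos_left hlb hc0
        rw [h2] at h3
        linarith
      have : c₁ ≤ lam / d j - 1 := by linarith
      exact le_trans this (le_abs_self _)
  -- diagonal of V is large off k
  have hvbig : ∀ j : Fin p, j ≠ k → c₁/2 ≤ |Omg j j - lam / d j| := by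
    intro j hj
    have h1 := hgapk j hj
    have h2 := hdiag j
    have h3 : |lam / d j - 1| ≤ |Omg j j - 1| + |Omg j j - lam / d j| := by
      have : lam / d j - 1 = -((Omg j j - lam/d j) - (Omg j j - 1)) := by ring
      rw [this, abs_neg]
      exact le_trans (abs_sub _ _) (by rw [add_comm])
    linarith
  have hvne : ∀ j : Fin p, j ≠ k → Omg j j - lam / d j ≠ 0 := by
    intro j hj
    have := hvbig j hj
    intro h
    rw [h, abs_zero] at this
    linarith
  -- entries of M = V * Jk
  set M := V * Jk with hMdef
  have hMentry : ∀ i j : Fin p, M i j = V i j * (if j = k then (1:ℝ) else (Omg j j - lam / d j)⁻¹) := by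
    intro i j
    rw [hMdef, hJk, Matrix.mul_diagonal]
  have hVdiag : ∀ j : Fin p, V j j = Omg j j - lam / d j := by
    intro j
    rw [hV, Matrix.sub_apply, Matrix.diagonal_apply_eq, div_eq_mul_inv]
  have hVoff : ∀ i j : Fin p, i ≠ j → V i j = Omg i j := by
    intro i j hij
    rw [hV, Matrix.sub_apply, Matrix.diagonal_apply_ne _ hij, sub_zero]
  have hMdiag : ∀ j : Fin p, j ≠ k → M j j = 1 := by
    intro j hj
    rw [hMentry, hVdiag, if_neg hj, mul_inv_cancel₀ (hvne j hj)]
  have hMkk : M k k = Omg k k - lam / d k := by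
    rw [hMentry, hVdiag, if_pos rfl, mul_one]
  have hMkk_le : |M k k| ≤ 1 := by
    rw [hMkk]
    have h1 := hdiag k
    have h2 : |lam / d k - 1| < (c-1)/(2*c) := hk
    have h3 : (c-1)/(2*c) < 1/2 := by
      rw [div_lt_div_iff₀ (by linarith) (by norm_num)]
      linarith
    have h4 : |Omg k k - lam / d k| ≤ |Omg k k - 1| + |lam / d k - 1| := by
      have : Omg k k - lam / d k = (Omg k k - 1) - (lam / d k - 1) := by ring
      rw [this]
      exact abs_sub _ _
    linarith [h4, h1, h2, h3, hc1lt1]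
  have hMoff : ∀ i j : Fin p, i ≠ j → |M i j| ≤ δ := by
    intro i j hij
    rw [hMentry, hVoff i j hij, abs_mul]
    apply mul_le_mul (hεoff i j hij) _ (abs_nonneg _) hε0
    by_cases hjk : j = k
    · rw [if_pos hjk, abs_one]
      exact le_max_left _ _
    · rw [if_neg hjk, abs_inv]
      refine le_trans ?_ (le_max_right 1 (2/c₁))
      have hv := hvbig j hjk
      have hvpos : 0 < |Omg j j - lam / d j| := lt_of_lt_of_le (by linarith) hv
      rw [inv_le_comm₀ hvpos (by positivity), inv_div]
      exact hv
  have hMdiag_le : ∀ j : Fin p, |M j j| ≤ 1 := by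
    intro j
    by_cases hj : j = k
    · rw [hj]; exact hMkk_le
    · rw [hMdiag j hj, abs_one]
  -- determinant expansion
  have hdet : M.det = (∏ i, M i i)
      + ∑ σ ∈ (Finset.univ.erase (1 : Equiv.Perm (Fin p))),
          ((Equiv.Perm.sign σ : ℤ) : ℝ) * ∏ i, M (σ i) i := by
    rw [Matrix.det_apply']
    rw [← Finset.add_sum_erase _ _ (Finset.mem_univ (1 : Equiv.Perm (Fin p)))]
    simp
  have hprodid : (∏ i, M i i) = M k k := by
    apply Finset.prod_eq_single
    · intro j _ hj
      exact hMdiag j hj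
    · intro h; exact absurd (Finset.mem_univ k) h
  have hbound : ∀ σ : Equiv.Perm (Fin p), σ ≠ 1 →
      |((Equiv.Perm.sign σ : ℤ) : ℝ) * ∏ i, M (σ i) i| ≤ δ ^ σ.support.card := by
    intro σ hσ
    have hsign : |((Equiv.Perm.sign σ : ℤ) : ℝ)| = 1 := by
      rcases Int.units_eq_one_or (Equiv.Perm.sign σ) with h | h <;> rw [h] <;> simp
    rw [abs_mul, hsign, one_mul, Finset.abs_prod]
    calc ∏ i, |M (σ i) i| ≤ ∏ i, (if i ∈ σ.support then δ else 1) := by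
          apply Finset.prod_le_prod (fun _ _ => abs_nonneg _)
          intro i _
          by_cases h : i ∈ σ.support
          · rw [if_pos h]
            exact hMoff (σ i) i (Equiv.Perm.mem_support.mp h)
          · rw [if_neg h]
            rw [Equiv.Perm.notMem_support] at h
            rw [h]
            exact hMdiag_le i
      _ = δ ^ σ.support.card := by
          rw [Finset.prod_ite_mem, Finset.univ_inter, Finset.prod_const]
  -- small parameter
  have hpδ : (p:ℝ) * δ ≤ 1/4 := by
    have h1 : (p:ℝ) * δ = ((p:ℝ) * ε) * max 1 (2/c₁) := by rw [hδdef]; ring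
    rw [h1]
    have h2 : ((p:ℝ) * ε) * max 1 (2/c₁) ≤ (c₁/8) * max 1 (2/c₁) :=
      mul_le_mul_of_nonneg_right hsmall hmax0
    refine le_trans h2 ?_
    rcases max_cases (1:ℝ) (2/c₁) with ⟨heq, _⟩ | ⟨heq, _⟩
    · rw [heq]; linarith
    · rw [heq]
      have hne : c₁ ≠ 0 := ne_of_gt hc1pos
      have : c₁/8 * (2/c₁) = 1/4 := by field_simp; ring
      rw [this]
  have hpδ0 : 0 ≤ (p:ℝ) * δ := mul_nonneg (Nat.cast_nonneg _) hδ0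
  -- putting it together
  have hmain : |M.det - M k k| ≤ (p:ℝ) * δ / 3 := by
    rw [hdet, hprodid]
    have h1 : M k k + (∑ σ ∈ (Finset.univ.erase (1 : Equiv.Perm (Fin p))),
        ((Equiv.Perm.sign σ : ℤ) : ℝ) * ∏ i, M (σ i) i) - M k k
        = ∑ σ ∈ (Finset.univ.erase (1 : Equiv.Perm (Fin p))),
        ((Equiv.Perm.sign σ : ℤ) : ℝ) * ∏ i, M (σ i) i := by ring
    rw [h1]
    calc |∑ σ ∈ (Finset.univ.erase (1 : Equiv.Perm (Fin p))),
        ((Equiv.Perm.sign σ : ℤ) : ℝ) * ∏ i, M (σ i) i|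
        ≤ ∑ σ ∈ (Finset.univ.erase (1 : Equiv.Perm (Fin p))),
          |((Equiv.Perm.sign σ : ℤ) : ℝ) * ∏ i, M (σ i) i| :=
          Finset.abs_sum_le_sum_abs _ _
      _ ≤ ∑ σ ∈ (Finset.univ.erase (1 : Equiv.Perm (Fin p))), δ ^ σ.support.card := by
          apply Finset.sum_le_sum
          intro σ hσ
          exact hbound σ (Finset.ne_of_mem_erase hσ)
      _ = ∑ σ ∈ Finset.univ.filter (fun σ : Equiv.Perm (Fin p) => σ ≠ 1), δ ^ σ.support.card := by
          rw [Finset.filter_ne']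
      _ ≤ ∑ m ∈ Finset.Icc 2 (Fintype.card (Fin p)), ((Fintype.card (Fin p) : ℝ) * δ) ^ m :=
          sum_perm_pow_le δ hδ0
      _ = ∑ m ∈ Finset.Icc 2 p, ((p : ℝ) * δ) ^ m := by rw [Fintype.card_fin]
      _ ≤ (p:ℝ) * δ / 3 := geom_icc_le _ hpδ0 hpδ p
  -- final arithmetic
  rw [← hMkk]
  refine le_trans hmain ?_
  have hfinal : (p:ℝ) * δ / 3 = (max 1 (2/c₁) / 3) * ((p:ℝ) * ε) := by
    rw [hδdef]; ring
  rw [hfinal]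
  have hmaxle : max 1 (2/c₁) / 3 ≤ max 12 (8/c₁) := by
    rcases max_cases (1:ℝ) (2/c₁) with ⟨heq, _⟩ | ⟨heq, _⟩
    · rw [heq]
      exact le_trans (by norm_num) (le_max_left 12 (8/c₁))
    · rw [heq]
      refine le_trans ?_ (le_max_right (12:ℝ) (8/c₁))
      rw [div_div, div_le_div_iff₀ (by positivity) hc1pos]
      nlinarith
  rw [mul_assoc]
  exact mul_le_mul_of_nonneg_right hmaxle (mul_nonneg (Nat.cast_nonneg _) hε0)
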